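/- For every n ≥ 2, set h(n) = 2n + 4 − ⌊(n+3)φ⌋ and h'(n) = ⌊(n+2)/φ⌋ − 1, and let r(n) be the unique value appearing at least twice in the n-th antidiagonal of the Hurt-Sada array. Then the n-th antidiagonal has the following structure: A(i, n−i) = n − i for all 0 ≤ i < h(n); A(i, n−i) = r(n) for all h(n) ≤ i ≤ h'(n); and A(i, n−i) = n − i for all h'(n) < i ≤ n. -/

import Mathlib

/-- The golden ratio `(1 + √5)/2`. -/
noncomputable def phi : ℝ := (1 + Real.sqrt 5) / 2

/-- The Hurt-Sada array `A : ℕ → ℕ → ℕ`.  Row `0` is the identity sequence;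
row `n+1` is obtained from row `n` by moving the entry `n+1` (located at the unique
position `p` with `A n p = n+1`) by `n+1` places to the right, shifting the jumped-over
entries one place left. -/
noncomputable def A : ℕ → ℕ → ℕ
  | 0, k => k
  | n + 1, j =>
    let p := sInf {i | A n i = n + 1}
    if j < p then A n j
    else if j < p + (n + 1) then A n (j + 1)
    else if j = p + (n + 1) then n + 1
    else A n j

open goldenRatio in
lemma phi_eq : phi = Real.goldenRatio := rfl

lemma one_lt_phi : 1 < phi := phi_eq ▸ Real.one_lt_goldenRatio
lemma phi_lt_two : phi < 2 := phi_eq ▸ Real.goldenRatio_lt_two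
lemma phi_sq : phi^2 = phi + 1 := phi_eq ▸ Real.goldenRatio_sq
lemma phi_irr : Irrational phi := phi_eq ▸ Real.goldenRatio_irrational
lemma phi_pos : 0 < phi := lt_trans one_pos one_lt_phi

lemma A_succ (m j : ℕ) : A (m+1) j =
    (if j < sInf {i | A m i = m + 1} then A m j
     else if j < sInf {i | A m i = m + 1} + (m + 1) then A m (j + 1)
     else if j = sInf {i | A m i = m + 1} + (m + 1) then m + 1
     else A m j) := by
  rw [A]

/-- position function `p u = ⌊(u+1)/φ⌋` -/
noncomputable def pfn (u : ℕ) : ℕ := ⌊((u:ℝ)+1)/phi⌋₊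

/-- the position of value `u` in row `m` -/
noncomputable def loc (m u : ℕ) : ℕ :=
  if u ≤ m then max u (pfn u + 2*u - m) else min u (pfn u + u - 1 - m)

lemma pfn_lb (u : ℕ) : (pfn u : ℝ) * phi < (u:ℝ)+1 := by
  have hx : (0:ℝ) ≤ ((u:ℝ)+1)/phi := div_nonneg (by positivity) phi_pos.le
  have h1 : (pfn u : ℝ) ≤ ((u:ℝ)+1)/phi := Nat.floor_le hx
  have hirr : Irrational (((u:ℝ)+1)/phi) := by
    have h1 : Irrational phi⁻¹ := phi_irr.inv
    have := h1.ratCast_mul (q := (u:ℚ)+1) (Nat.cast_add_one_ne_zero u)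
    rw [div_eq_mul_inv]
    convert this using 2
    push_cast; ring
  have hne : (pfn u : ℝ) ≠ ((u:ℝ)+1)/phi := by
    intro h
    exact hirr ⟨(pfn u : ℚ), by rw [← h]; push_cast; rfl⟩
  have h2 : (pfn u : ℝ) < ((u:ℝ)+1)/phi := lt_of_le_of_ne h1 hne
  calc (pfn u : ℝ) * phi < (((u:ℝ)+1)/phi) * phi := by
        exact mul_lt_mul_of_pos_right h2 phi_pos
    _ = (u:ℝ)+1 := div_mul_cancel₀ _ (ne_of_gt phi_pos)

lemma pfn_ub (u : ℕ) : ((u:ℝ)+1) < ((pfn u : ℝ) + 1) * phi := by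
  have h := Nat.lt_floor_add_one (((u:ℝ)+1)/phi)
  calc ((u:ℝ)+1) = (((u:ℝ)+1)/phi) * phi := (div_mul_cancel₀ _ (ne_of_gt phi_pos)).symm
    _ < ((pfn u : ℝ) + 1) * phi := mul_lt_mul_of_pos_right h phi_pos

lemma phi_inv : phi * (phi - 1) = 1 := by nlinarith [phi_sq]

lemma pfn_mono : Monotone pfn := by
  intro a b hab
  apply Nat.floor_le_floor
  have h : ((a:ℝ)+1) ≤ (b:ℝ)+1 := by exact_mod_cast Nat.add_le_add_right hab 1
  exact (div_le_div_iff_of_pos_right phi_pos).mpr h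

lemma pfn_le (m : ℕ) : pfn (m+1) ≤ m+1 := by
  have h := pfn_lb (m+1)
  have : ((pfn (m+1)):ℝ) < ((m+1:ℕ):ℝ) + 1 := by nlinarith [one_lt_phi]
  exact_mod_cast Nat.lt_succ_iff.mp (by exact_mod_cast this)

lemma pfn_pos {u : ℕ} (h : 1 ≤ u) : 1 ≤ pfn u := by
  have h2 := pfn_ub u
  have hu : (2:ℝ) ≤ (u:ℝ)+1 := by exact_mod_cast (by omega : 2 ≤ u+1)
  have : (0:ℝ) < (pfn u : ℝ) := by nlinarith [phi_lt_two]
  exact_mod_cast this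

lemma L_A {u m : ℕ} (h : pfn u + u ≤ m) : u < pfn (m+1) := by
  have hu2 := pfn_ub u
  have hP2 := pfn_ub (m+1)
  have hφ : (0:ℝ) < phi - 1 := by linarith [one_lt_phi]
  have hc : ((pfn u : ℝ) + (u:ℝ)) ≤ (m:ℝ) := by exact_mod_cast h
  push_cast at hP2
  have s1 : ((u:ℝ)+1)*(phi-1) < (pfn u : ℝ) + 1 := by
    nlinarith [mul_lt_mul_of_pos_right hu2 hφ, phi_inv]
  have s2 : ((u:ℝ)+1)*phi < (m:ℝ)+2 := by nlinarith
  have : (u:ℝ) < (pfn (m+1) : ℝ) := by nlinarith [phi_pos]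
  exact_mod_cast this

lemma L_B {u m : ℕ} (h : m+1 ≤ pfn u + u) : pfn (m+1) ≤ u := by
  have hu1 := pfn_lb u
  have hP1 := pfn_lb (m+1)
  have hφ : (0:ℝ) < phi - 1 := by linarith [one_lt_phi]
  have hc : ((m:ℝ)+1) ≤ (pfn u : ℝ) + (u:ℝ) := by exact_mod_cast h
  push_cast at hP1
  -- pfn u < (u+1)(phi-1), so pfn u + u + 1 < (u+1)phi, so P*phi < (m+2) ≤ (u+1)phi
  have s1 : (pfn u : ℝ) < ((u:ℝ)+1)*(phi-1) := by
    nlinarith [mul_lt_mul_of_pos_right hu1 hφ, phi_inv]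
  have s2 : ((m:ℝ)+2) ≤ ((u:ℝ)+1)*phi := by nlinarith
  have : (pfn (m+1) : ℝ) < (u:ℝ)+1 := by nlinarith [phi_pos]
  have := (by exact_mod_cast this : pfn (m+1) < u + 1)
  omega

lemma L_E {u m : ℕ} (h : m+2 ≤ pfn u) : pfn (m+1) + m + 2 ≤ u := by
  have hu1 := pfn_lb u
  have hP1 := pfn_lb (m+1)
  have hc : ((m:ℝ)+2) ≤ (pfn u : ℝ) := by exact_mod_cast h
  push_cast at hP1
  have hφ : (0:ℝ) < phi - 1 := by linarith [one_lt_phi]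
  -- u+1 > pfn u * phi ≥ (m+2)*phi = (m+2) + (m+2)*(phi-1) > (m+2) + P*phi*(phi-1) = m+2+P
  have s1 : ((m:ℝ)+2)*(phi-1) > (pfn (m+1) : ℝ) := by
    nlinarith [mul_lt_mul_of_pos_right hP1 hφ, phi_inv]
  have s2 : ((m:ℝ)+2)*phi ≤ (pfn u : ℝ) * phi := by
    exact mul_le_mul_of_nonneg_right hc phi_pos.le
  have : ((pfn (m+1) : ℝ) + (m:ℝ) + 2) < (u:ℝ)+1 := by nlinarith
  have := (by exact_mod_cast this : pfn (m+1) + m + 2 < u + 1)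
  omega

lemma L_F {u m : ℕ} (h : pfn u ≤ m+1) : u ≤ pfn (m+1) + m + 1 := by
  have hu2 := pfn_ub u
  have hP2 := pfn_ub (m+1)
  have hc : (pfn u : ℝ) ≤ (m:ℝ)+1 := by exact_mod_cast h
  push_cast at hP2
  have hφ : (0:ℝ) < phi - 1 := by linarith [one_lt_phi]
  -- u+1 < (pfn u + 1)*phi ≤ (m+2)*phi = (m+2) + (m+2)(phi-1) < (m+2)+(P+1)
  have s1 : ((m:ℝ)+2)*(phi-1) < (pfn (m+1) : ℝ) + 1 := by
    nlinarith [mul_lt_mul_of_pos_right hP2 hφ, phi_inv]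
  have s2 : ((u:ℝ)+1) < ((m:ℝ)+2)*phi := by nlinarith [phi_pos]
  have : (u:ℝ) < (pfn (m+1) : ℝ) + (m:ℝ) + 2 := by nlinarith
  have := (by exact_mod_cast this : u < pfn (m+1) + m + 2)
  omega

lemma pfn_zero : pfn 0 = 0 := by
  unfold pfn
  rw [Nat.floor_eq_zero, show ((0:ℕ):ℝ)+1 = 1 by norm_num, div_lt_one phi_pos]
  exact one_lt_phi

lemma loc_zero (u : ℕ) : loc 0 u = u := by
  rcases Nat.eq_zero_or_pos u with h | h
  · subst h; simp [loc, pfn_zero]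
  · have h1 := pfn_pos h
    simp only [loc]
    rw [if_neg (by omega)]
    omega

lemma A_zero (k : ℕ) : A 0 k = k := by rw [A]

lemma master (m : ℕ) : (∀ u, A m (loc m u) = u) ∧ Function.Injective (A m) := by
  induction m with
  | zero =>
    constructor
    · intro u; rw [loc_zero, A_zero]
    · intro a b hab; rwa [A_zero, A_zero] at hab
  | succ m IH =>
    obtain ⟨IH1, IH2⟩ := IH
    set P := pfn (m+1) with hPdef
    have hPle : P ≤ m+1 := pfn_le m
    have hlocP : loc m (m+1) = P := by
      simp only [loc]
      rw [if_neg (by omega)]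
      omega
    have hAmP : A m P = m+1 := by rw [← hlocP]; exact IH1 (m+1)
    have hset : {i | A m i = m+1} = {P} := by
      ext i
      simp only [Set.mem_setOf_eq, Set.mem_singleton_iff]
      constructor
      · intro h; exact IH2 (h.trans hAmP.symm)
      · intro h; rw [h]; exact hAmP
    have hinf : sInf {i | A m i = m+1} = P := by rw [hset]; exact csInf_singleton P
    have hA : ∀ j, A (m+1) j =
        if j < P then A m j
        else if j < P + (m+1) then A m (j+1)
        else if j = P + (m+1) then m+1
        else A m j := by
      intro j; rw [A_succ, hinf]
    have hAs : ∀ j, A (m+1) j =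
        A m (if j < P then j else if j < P + (m+1) then j+1
             else if j = P + (m+1) then P else j) := by
      intro j
      rw [hA j]
      split_ifs with h1 h2 h3 <;> try rfl
      exact hAmP.symm
    have hinj : Function.Injective (A (m+1)) := by
      intro a b hab
      rw [hAs a, hAs b] at hab
      have := IH2 hab
      split_ifs at this <;> omega
    refine ⟨?_, hinj⟩
    intro u
    rcases lt_trichotomy u (m+1) with hu | hu | hu
    · -- u ≤ m
      have hum : u ≤ m := by omega
      have hpuP : pfn u ≤ P := pfn_mono (by omega : u ≤ m + 1)
      rcases lt_trichotomy (pfn u + u) (m+1) with hc | hc | hc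
      · -- home: pfn u + u ≤ m
        have hup : u < P := L_A (by omega)
        have hj : loc (m+1) u = u := by
          simp only [loc]; rw [if_pos (by omega)]; omega
        have hold : loc m u = u := by
          simp only [loc]; rw [if_pos (by omega)]; omega
        rw [hj, hA, if_pos hup]
        have := IH1 u; rwa [hold] at this
      · -- pfn u + u = m+1
        have hPu : P ≤ u := L_B (by omega)
        have hj : loc (m+1) u = u := by
          simp only [loc]; rw [if_pos (by omega)]; omega
        have hold : loc m u = u + 1 := by
          simp only [loc]; rw [if_pos (by omega)]; omega
        rw [hj, hA, if_neg (by omega), if_pos (by omega)]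
        have := IH1 u; rwa [hold] at this
      · -- pfn u + u ≥ m+2, still drifting right-side
        have hPu : P ≤ u := L_B (by omega)
        have hj : loc (m+1) u = pfn u + 2*u - (m+1) := by
          simp only [loc]; rw [if_pos (by omega)]; omega
        have hold : loc m u = pfn u + 2*u - m := by
          simp only [loc]; rw [if_pos (by omega)]; omega
        rw [hj, hA, if_neg (by omega), if_pos (by omega)]
        have := IH1 u
        rw [hold] at this
        rw [show pfn u + 2*u - (m+1) + 1 = pfn u + 2*u - m by omega]
        exact this
    · -- u = m+1
      subst hu
      have hj : loc (m+1) (m+1) = P + (m+1) := by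
        simp only [loc]; rw [if_pos (le_refl _)]; omega
      rw [hj, hA, if_neg (by omega), if_neg (by omega), if_pos rfl]
    · -- u ≥ m+2
      have hu2 : m + 2 ≤ u := hu
      have hpu1 : 1 ≤ pfn u := pfn_pos (by omega)
      have hPpu : P ≤ pfn u := pfn_mono (by omega : m + 1 ≤ u)
      rcases lt_trichotomy (pfn u) (m+1) with hc | hc | hc
      · -- pfn u ≤ m : drifting left-side
        have hle : u ≤ P + m + 1 := L_F (by omega)
        have hj : loc (m+1) u = pfn u + u - m - 2 := by
          simp only [loc]; rw [if_neg (by omega)]; omega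
        have hold : loc m u = pfn u + u - m - 1 := by
          simp only [loc]; rw [if_neg (by omega)]; omega
        rw [hj, hA, if_neg (by omega), if_pos (by omega)]
        have := IH1 u
        rw [hold] at this
        rw [show pfn u + u - m - 2 + 1 = pfn u + u - m - 1 by omega]
        exact this
      · -- pfn u = m+1 : starts drifting now
        have hle : u ≤ P + m + 1 := L_F (by omega)
        have hj : loc (m+1) u = u - 1 := by
          simp only [loc]; rw [if_neg (by omega)]; omega
        have hold : loc m u = u := by
          simp only [loc]; rw [if_neg (by omega)]; omega
        rw [hj, hA, if_neg (by omega), if_pos (by omega)]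
        have := IH1 u
        rw [hold] at this
        rw [show u - 1 + 1 = u by omega]
        exact this
      · -- pfn u ≥ m+2 : untouched
        have hge : P + m + 2 ≤ u := L_E (by omega)
        have hj : loc (m+1) u = u := by
          simp only [loc]; rw [if_neg (by omega)]; omega
        have hold : loc m u = u := by
          simp only [loc]; rw [if_neg (by omega)]; omega
        rw [hj, hA, if_neg (by omega), if_neg (by omega), if_neg (by omega)]
        have := IH1 u; rwa [hold] at this

lemma pfn_eq {u b : ℕ} (h1 : (b:ℝ)*phi < (u:ℝ)+1) (h2 : ((u:ℝ)+1) < ((b:ℝ)+1)*phi) :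
    pfn u = b := by
  have l1 := pfn_lb u
  have l2 := pfn_ub u
  have c1 : (b:ℝ) < (pfn u:ℝ)+1 := (mul_lt_mul_iff_left₀ phi_pos).mp (h1.trans l2)
  have c2 : (pfn u:ℝ) < (b:ℝ)+1 := (mul_lt_mul_iff_left₀ phi_pos).mp (l1.trans h2)
  have d1 : b < pfn u + 1 := by exact_mod_cast c1
  have d2 : pfn u < b + 1 := by exact_mod_cast c2
  omega

lemma floor_mul_eq (n : ℕ) : ⌊((n:ℝ)+3)*phi⌋₊ = n+3+pfn (n+2) := by
  have l1 := pfn_lb (n+2)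
  have l2 := pfn_ub (n+2)
  push_cast at l1 l2
  have hφ : (0:ℝ) < phi - 1 := by linarith [one_lt_phi]
  have e1 : (pfn (n+2):ℝ)*phi*(phi-1) = pfn (n+2) := by
    rw [mul_assoc, phi_inv, mul_one]
  have m1 := mul_lt_mul_of_pos_right l1 hφ
  have m2 := mul_lt_mul_of_pos_right l2 hφ
  rw [e1] at m1
  have e2 : ((pfn (n+2):ℝ) + 1) * phi * (phi-1) = (pfn (n+2):ℝ) + 1 := by
    rw [mul_assoc, phi_inv, mul_one]
  rw [e2] at m2
  rw [Nat.floor_eq_iff (by nlinarith [phi_pos] : (0:ℝ) ≤ ((n:ℝ)+3)*phi)]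
  constructor
  · push_cast; nlinarith [phi_inv]
  · push_cast; nlinarith [phi_inv]

lemma phi_gt_15 : (3:ℝ)/2 < phi := by nlinarith [phi_sq, one_lt_phi]

set_option maxHeartbeats 1000000 in
theorem antidiagonal_structure (n : ℕ) (hn : 2 ≤ n) (r : ℕ)
    (hr : ∃ i j : ℕ, i < j ∧ j ≤ n ∧ A i (n - i) = r ∧ A j (n - j) = r) :
    (∀ i < 2 * n + 4 - ⌊((n : ℝ) + 3) * phi⌋₊, A i (n - i) = n - i) ∧
      (∀ i, 2 * n + 4 - ⌊((n : ℝ) + 3) * phi⌋₊ ≤ i → i ≤ ⌊((n : ℝ) + 2) / phi⌋₊ - 1 →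
        A i (n - i) = r) ∧
      (∀ i, ⌊((n : ℝ) + 2) / phi⌋₊ - 1 < i → i ≤ n → A i (n - i) = n - i) := by
  have hφ1 : (0:ℝ) < phi - 1 := by linarith [one_lt_phi]
  set c := pfn (n+1) with hcdef
  set d := pfn (n+2) with hddef
  have hfloor2 : ⌊((n:ℝ)+2)/phi⌋₊ = c := by
    rw [hcdef]; unfold pfn; congr 1; push_cast; ring
  have hfloor1 : ⌊((n:ℝ)+3)*phi⌋₊ = n+3+d := floor_mul_eq n
  -- real bounds for c and d
  have hc1 : (c:ℝ)*phi < (n:ℝ)+2 := by have := pfn_lb (n+1); push_cast at this; linarith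
  have hc2 : (n:ℝ)+2 < ((c:ℝ)+1)*phi := by have := pfn_ub (n+1); push_cast at this; linarith
  have hd1 : (d:ℝ)*phi < (n:ℝ)+3 := by have := pfn_lb (n+2); push_cast at this; linarith
  have hd2 : (n:ℝ)+3 < ((d:ℝ)+1)*phi := by have := pfn_ub (n+2); push_cast at this; linarith
  -- basic nat facts about c
  have hcn : c ≤ n := by
    by_contra hcon
    have h1 : (n:ℝ)+1 ≤ (c:ℝ) := by exact_mod_cast (by omega : n+1 ≤ c)
    have h15 := phi_gt_15
    have hn' : (2:ℝ) ≤ (n:ℝ) := by exact_mod_cast hn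
    have h2 : ((n:ℝ)+1)*phi ≤ (c:ℝ)*phi := mul_le_mul_of_nonneg_right h1 phi_pos.le
    have h3 : ((n:ℝ)+1)*(3/2) ≤ ((n:ℝ)+1)*phi :=
      mul_le_mul_of_nonneg_left h15.le (by positivity)
    linarith
  have h2c : n < 2*c := by
    have hcle : (c:ℝ)*phi ≤ (c:ℝ)*2 := mul_le_mul_of_nonneg_left phi_lt_two.le (by positivity)
    have : (n:ℝ) < 2*(c:ℝ) := by linarith [hcle, hc2, phi_lt_two]
    exact_mod_cast this
  have hcd : c ≤ d := pfn_mono (by omega)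
  have hdc : d ≤ c + 1 := by
    have hm : (d:ℝ)*phi < ((c:ℝ)+2)*phi := by nlinarith [hd1, hc2, one_lt_phi]
    have : (d:ℝ) < (c:ℝ)+2 := (mul_lt_mul_iff_left₀ phi_pos).mp hm
    have : d < c+2 := by exact_mod_cast this
    omega
  have hce : ((n:ℝ)+2)*(phi-1) < (c:ℝ)+1 := by
    have m := mul_lt_mul_of_pos_right hc2 hφ1
    have e2 : ((c:ℝ)+1)*phi*(phi-1) = (c:ℝ)+1 := by rw [mul_assoc, phi_inv, mul_one]
    rw [e2] at m; linarith
  have hce' : (c:ℝ) < ((n:ℝ)+2)*(phi-1) := by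
    have m := mul_lt_mul_of_pos_right hc1 hφ1
    have e1 : (c:ℝ)*phi*(phi-1) = (c:ℝ) := by rw [mul_assoc, phi_inv, mul_one]
    rw [e1] at m; linarith
  -- region 3 : c ≤ i ≤ n gives identity
  have hreg3 : ∀ i, c ≤ i → i ≤ n → A i (n-i) = n-i := by
    intro i hci hin
    have hci' : (c:ℝ) ≤ (i:ℝ) := by exact_mod_cast hci
    have hin' : (i:ℝ) ≤ (n:ℝ) := by exact_mod_cast hin
    have hni : ((n-i:ℕ):ℝ) = (n:ℝ)-(i:ℝ) := by
      push_cast [Nat.cast_sub hin]; ring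
    -- key : pfn (n-i) + (n-i) ≤ i
    have hkey : pfn (n-i) + (n-i) ≤ i := by
      have l1 := pfn_lb (n-i)
      rw [hni] at l1
      -- (n-i+1) < (2i-n+1)*phi
      have c1 : (c:ℝ)*phi ≤ (i:ℝ)*phi := mul_le_mul_of_nonneg_right hci' phi_pos.le
      have c2 : ((n:ℝ)+2)*(phi-1) < ((c:ℝ)+1)*phi*(phi-1) := mul_lt_mul_of_pos_right hc2 hφ1
      have e2 : ((c:ℝ)+1)*phi*(phi-1) = (c:ℝ)+1 := by rw [mul_assoc, phi_inv, mul_one]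
      rw [e2] at c2
      have hb : ((n:ℝ)-(i:ℝ)+1) < (2*(i:ℝ)-(n:ℝ)+1)*phi := by
        have c2' : ((n:ℝ)+2)*(phi-1) < (c:ℝ)+1 := c2
        nlinarith [c1, c2', hc2, hci', phi_pos]
      have : (pfn (n-i) : ℝ) * phi < (2*(i:ℝ)-(n:ℝ)+1)*phi := by linarith
      have hp : (pfn (n-i) : ℝ) < 2*(i:ℝ)-(n:ℝ)+1 := (mul_lt_mul_iff_left₀ phi_pos).mp this
      have hp2 : (pfn (n-i) : ℝ) + ((n:ℝ)-(i:ℝ)) < (i:ℝ)+1 := by linarith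
      have : ((pfn (n-i) + (n-i) : ℕ) : ℝ) < (i:ℝ)+1 := by rw [Nat.cast_add, hni]; linarith
      exact_mod_cast Nat.lt_succ_iff.mp (by exact_mod_cast this)
    have hloc : loc i (n-i) = n-i := by
      simp only [loc]; rw [if_pos (by omega)]; omega
    have hm := (master i).1 (n-i)
    rwa [hloc] at hm
  -- region 1 core : small i gives identity
  have hreg1 : ∀ i, 2*i < n → ((i:ℝ)+1)*(phi+1) < (n:ℝ)+2 → A i (n-i) = n-i := by
    intro i h2i hib
    have hin : i ≤ n := by omega
    have hni : ((n-i:ℕ):ℝ) = (n:ℝ)-(i:ℝ) := by push_cast [Nat.cast_sub hin]; ring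
    have hkey : i + 1 ≤ pfn (n-i) := by
      have l2 := pfn_ub (n-i)
      rw [hni] at l2
      have : ((i:ℝ)+1)*phi < ((pfn (n-i):ℝ)+1)*phi := by nlinarith [hib, l2]
      have : (i:ℝ)+1 < (pfn (n-i):ℝ)+1 := (mul_lt_mul_iff_left₀ phi_pos).mp this
      have : i+1 < pfn (n-i)+1 := by exact_mod_cast this
      omega
    have hloc : loc i (n-i) = n-i := by
      simp only [loc]; rw [if_neg (by omega)]; omega
    have hm := (master i).1 (n-i)
    rwa [hloc] at hm
  rw [hfloor1, hfloor2]
  rcases (by omega : d = c + 1 ∨ d = c) with hcase | hcase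
  · -- CASE A : middle value is c, middle block [n-c, c-1]
    have hA1 : ((c:ℝ)+1)*phi < (n:ℝ)+3 := by
      rw [hcase] at hd1; push_cast at hd1; linarith
    -- pfn c = n+1-c
    have hpc : pfn c = n+1-c := by
      have hcast : ((n+1-c:ℕ):ℝ) = (n:ℝ)+1-(c:ℝ) := by
        push_cast [Nat.cast_sub (by omega : c ≤ n+1)]; ring
      have hAe : (c:ℝ)+1 < ((n:ℝ)+3)*(phi-1) := by
        have m := mul_lt_mul_of_pos_right hA1 hφ1
        have e1 : ((c:ℝ)+1)*phi*(phi-1) = (c:ℝ)+1 := by rw [mul_assoc, phi_inv, mul_one]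
        rw [e1] at m; linarith
      apply pfn_eq <;> rw [hcast]
      · nlinarith [hce, hc2]
      · nlinarith [hAe, hA1]
    have hmid : ∀ i, n-c ≤ i → i ≤ c-1 → A i (n-i) = c := by
      intro i h1 h2
      have hloc : loc i c = n-i := by
        simp only [loc]; rw [if_neg (by omega)]; omega
      have hm := (master i).1 c
      rwa [hloc] at hm
    have hreg1' : ∀ i, i < n-c → A i (n-i) = n-i := by
      intro i hi
      apply hreg1 i (by omega)
      have hi' : (i:ℝ)+1 ≤ (n:ℝ)-(c:ℝ) := by
        have : ((i+1:ℕ):ℝ) ≤ ((n-c:ℕ):ℝ) := by exact_mod_cast (by omega : i+1 ≤ n-c)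
        push_cast [Nat.cast_sub hcn] at this; linarith
      have hprod : ((i:ℝ)+1)*(phi+1) ≤ ((n:ℝ)-(c:ℝ))*(phi+1) :=
        mul_le_mul_of_nonneg_right hi' (by linarith [phi_pos])
      nlinarith [hprod, hc2, hce]
    -- identify r
    have hrv : r = c := by
      obtain ⟨i0, j0, hij, hj0n, hri, hrj⟩ := hr
      by_cases hm : n-c ≤ i0 ∧ i0 ≤ c-1
      · rw [hmid i0 hm.1 hm.2] at hri; omega
      · have hi0 : A i0 (n-i0) = n-i0 := by
          rcases (by omega : i0 < n-c ∨ c ≤ i0) with h | h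
          · exact hreg1' i0 h
          · exact hreg3 i0 h (by omega)
        rw [hi0] at hri
        by_cases hm2 : n-c ≤ j0 ∧ j0 ≤ c-1
        · rw [hmid j0 hm2.1 hm2.2] at hrj; omega
        · have hj0 : A j0 (n-j0) = n-j0 := by
            rcases (by omega : j0 < n-c ∨ c ≤ j0) with h | h
            · exact hreg1' j0 h
            · exact hreg3 j0 h hj0n
          rw [hj0] at hrj
          omega
    refine ⟨?_, ?_, ?_⟩
    · intro i hi
      exact hreg1' i (by omega)
    · intro i h1 h2
      rw [hrv]
      exact hmid i (by omega) (by omega)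
    · intro i h1 h2
      exact hreg3 i (by omega) h2
  · -- CASE B : middle value is n+1-c, middle block [n+1-c, c-1]
    have hB1 : (n:ℝ)+3 < ((c:ℝ)+1)*phi := by
      rw [hcase] at hd2; push_cast at hd2; linarith
    have h2c' : n+2 ≤ 2*c := by
      have : (n:ℝ)+1 < 2*(c:ℝ) := by nlinarith [phi_lt_two]
      have : n+1 < 2*c := by exact_mod_cast this
      omega
    have hc3 : (n:ℝ)+3-phi < (c:ℝ)*phi := by linarith [hB1]
    have hBe : ((n:ℝ)+3)*(phi-1) - 1 < (c:ℝ) := by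
      have m := mul_lt_mul_of_pos_right hc3 hφ1
      have e1 : (c:ℝ)*phi*(phi-1) = (c:ℝ) := by rw [mul_assoc, phi_inv, mul_one]
      nlinarith [m, e1, phi_sq]  -- linear in monomials
    have hpv : pfn (n+1-c) = 2*c-n-2 := by
      have hcast1 : ((n+1-c:ℕ):ℝ) = (n:ℝ)+1-(c:ℝ) := by
        push_cast [Nat.cast_sub (by omega : c ≤ n+1)]; ring
      have hcast2 : ((2*c-n-2:ℕ):ℝ) = 2*(c:ℝ)-(n:ℝ)-2 := by
        rw [show 2*c-n-2 = 2*c-(n+2) by omega, Nat.cast_sub (by omega : n+2 ≤ 2*c)]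
        push_cast; ring
      apply pfn_eq <;> rw [hcast1, hcast2]
      · nlinarith [hc1, hce']
      · nlinarith [hc3, hBe]
    have hmid : ∀ i, n+1-c ≤ i → i ≤ c-1 → A i (n-i) = n+1-c := by
      intro i h1 h2
      have hloc : loc i (n+1-c) = n-i := by
        simp only [loc]; rw [if_pos (by omega)]; omega
      have hm := (master i).1 (n+1-c)
      rwa [hloc] at hm
    have hreg1' : ∀ i, i < n+1-c → A i (n-i) = n-i := by
      intro i hi
      apply hreg1 i (by omega)
      have hi' : (i:ℝ)+1 ≤ (n:ℝ)+1-(c:ℝ) := by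
        have : ((i+1:ℕ):ℝ) ≤ ((n+1-c:ℕ):ℝ) := by exact_mod_cast (by omega : i+1 ≤ n+1-c)
        push_cast [Nat.cast_sub (by omega : c ≤ n+1)] at this; linarith
      have hprod : ((i:ℝ)+1)*(phi+1) ≤ ((n:ℝ)+1-(c:ℝ))*(phi+1) :=
        mul_le_mul_of_nonneg_right hi' (by linarith [phi_pos])
      nlinarith [hprod, hc3, hBe, phi_pos]
    have hrv : r = n+1-c := by
      obtain ⟨i0, j0, hij, hj0n, hri, hrj⟩ := hr
      by_cases hm : n+1-c ≤ i0 ∧ i0 ≤ c-1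
      · rw [hmid i0 hm.1 hm.2] at hri; omega
      · have hi0 : A i0 (n-i0) = n-i0 := by
          rcases (by omega : i0 < n+1-c ∨ c ≤ i0) with h | h
          · exact hreg1' i0 h
          · exact hreg3 i0 h (by omega)
        rw [hi0] at hri
        by_cases hm2 : n+1-c ≤ j0 ∧ j0 ≤ c-1
        · rw [hmid j0 hm2.1 hm2.2] at hrj; omega
        · have hj0 : A j0 (n-j0) = n-j0 := by
            rcases (by omega : j0 < n+1-c ∨ c ≤ j0) with h | h
            · exact hreg1' j0 h
            · exact hreg3 j0 h hj0n
          rw [hj0] at hrj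
          omega
    refine ⟨?_, ?_, ?_⟩
    · intro i hi
      exact hreg1' i (by omega)
    · intro i h1 h2
      rw [hrv]
      exact hmid i (by omega) (by omega)
    · intro i h1 h2
      exact hreg3 i (by omega) h2
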